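/- With the setup of [MP1]: if η* = (v*, u*, z*, f*, x*, δ¹*, δ²*) is feasible for [MP1] with Φ(η*) = 0, then for every x : S × A² → ℝ with x ≥ 0, ∑_{(s,a²)} x(s,a²) = 1, ∑_{(s,a²)} (δ(s,s') − p(s'|s,a²))·x(s,a²) = 0 for all s', and ∑_{(s,a¹,a²)} f*(s,a¹)·D²ˡ(s,a¹,a²)·x(s,a²) ≤ ξ²_l for all l, one has ∑_{(s,a¹,a²)} f*(s,a¹)·C²(s,a¹,a²)·x*(s,a²) ≤ ∑_{(s,a¹,a²)} f*(s,a¹)·C²(s,a¹,a²)·x(s,a²). -/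
import Mathlib


theorem MP1_zero_objective_player2_best_response
    (S A1 A2 : Type) [Fintype S] [DecidableEq S] [Fintype A1] [Fintype A2]
    [Nonempty S] [Nonempty A1] [Nonempty A2]
    (n1 n2 : ℕ)
    (C1 C2 : S → A1 → A2 → ℝ)
    (d1 : Fin n1 → S → A1 → ℝ) (ξ1 : Fin n1 → ℝ)
    (D2 : Fin n2 → S → A1 → A2 → ℝ) (ξ2 : Fin n2 → ℝ)
    (p : S → A2 → S → ℝ)
    (hp0 : ∀ s a s', 0 ≤ p s a s')
    (hp1 : ∀ s a, ∑ s', p s a s' = 1)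
    (v : ℝ) (u z : S → ℝ) (f : S → A1 → ℝ) (x : S → A2 → ℝ)
    (δ1 : Fin n1 → ℝ) (δ2 : Fin n2 → ℝ)
    (h1 : ∀ s a2, v + u s ≤ (∑ a1, f s a1 * C2 s a1 a2)
        + (∑ l, δ2 l * ∑ a1, f s a1 * D2 l s a1 a2)
        + ∑ s', p s a2 s' * u s')
    (h2 : ∀ s a1, z s ≤ (∑ a2, C1 s a1 a2 * x s a2) + ∑ k, δ1 k * d1 k s a1)
    (h3 : ∀ s', ∑ s, ∑ a2,
      ((if s = s' then (1 : ℝ) else 0) - p s a2 s') * x s a2 = 0)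
    (h4 : ∑ s, ∑ a2, x s a2 = 1)
    (h5 : ∀ k, ∑ s, ∑ a1, d1 k s a1 * f s a1 ≤ ξ1 k)
    (h6 : ∀ l, ∑ s, ∑ a1, ∑ a2, f s a1 * D2 l s a1 a2 * x s a2 ≤ ξ2 l)
    (h7 : ∀ s, ∑ a1, f s a1 = 1)
    (h8 : ∀ s a1, 0 ≤ f s a1)
    (h9 : ∀ s a2, 0 ≤ x s a2)
    (h10 : ∀ k, 0 ≤ δ1 k)
    (h11 : ∀ l, 0 ≤ δ2 l)
    (hΦ : ((∑ s, ∑ a1, ∑ a2, f s a1 * C1 s a1 a2 * x s a2)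
          - (∑ s, z s) + ∑ k, δ1 k * ξ1 k)
      + ((∑ s, ∑ a1, ∑ a2, f s a1 * C2 s a1 a2 * x s a2)
          - v + ∑ l, δ2 l * ξ2 l) = 0) :
    ∀ x' : S → A2 → ℝ,
      (∀ s a2, 0 ≤ x' s a2) →
      (∑ s, ∑ a2, x' s a2 = 1) →
      (∀ s', ∑ s, ∑ a2,
        ((if s = s' then (1 : ℝ) else 0) - p s a2 s') * x' s a2 = 0) →
      (∀ l, ∑ s, ∑ a1, ∑ a2, f s a1 * D2 l s a1 a2 * x' s a2 ≤ ξ2 l) →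
      (∑ s, ∑ a1, ∑ a2, f s a1 * C2 s a1 a2 * x s a2)
        ≤ ∑ s, ∑ a1, ∑ a2, f s a1 * C2 s a1 a2 * x' s a2 := by
  classical
  -- Player 1 bracket is nonnegative (weak duality for player 1)
  have hb1 : (∑ s, z s) ≤ (∑ s, ∑ a1, ∑ a2, f s a1 * C1 s a1 a2 * x s a2)
      + ∑ k, δ1 k * ξ1 k := by
    have step : ∑ s, ∑ a1, f s a1 * z s
        ≤ ∑ s, ∑ a1, f s a1 * ((∑ a2, C1 s a1 a2 * x s a2) + ∑ k, δ1 k * d1 k s a1) :=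
      Finset.sum_le_sum fun s _ => Finset.sum_le_sum fun a1 _ =>
        mul_le_mul_of_nonneg_left (h2 s a1) (h8 s a1)
    have hL : ∑ s, ∑ a1, f s a1 * z s = ∑ s, z s := by
      refine Finset.sum_congr rfl fun s _ => ?_
      rw [← Finset.sum_mul, h7 s, one_mul]
    have hR : ∑ s, ∑ a1, f s a1 * ((∑ a2, C1 s a1 a2 * x s a2) + ∑ k, δ1 k * d1 k s a1)
        = (∑ s, ∑ a1, ∑ a2, f s a1 * C1 s a1 a2 * x s a2)
          + ∑ k, δ1 k * ∑ s, ∑ a1, d1 k s a1 * f s a1 := by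
      simp only [mul_add, Finset.sum_add_distrib]
      congr 1
      · refine Finset.sum_congr rfl fun s _ => Finset.sum_congr rfl fun a1 _ => ?_
        rw [Finset.mul_sum]
        exact Finset.sum_congr rfl fun a2 _ => by ring
      · rw [show (∑ s, ∑ a1, f s a1 * ∑ k, δ1 k * d1 k s a1)
            = ∑ s, ∑ k, δ1 k * ∑ a1, d1 k s a1 * f s a1 from
          Finset.sum_congr rfl fun s _ =>
            ((Finset.sum_congr rfl fun a1 _ => by
                rw [Finset.mul_sum]
                exact Finset.sum_congr rfl fun k _ => by ring).trans
              (Finset.sum_comm.trans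
                (Finset.sum_congr rfl fun k _ => (Finset.mul_sum ..).symm)))]
        exact Finset.sum_comm.trans
          (Finset.sum_congr rfl fun k _ => (Finset.mul_sum ..).symm)
    have hpen : ∑ k, δ1 k * ∑ s, ∑ a1, d1 k s a1 * f s a1 ≤ ∑ k, δ1 k * ξ1 k :=
      Finset.sum_le_sum fun k _ => mul_le_mul_of_nonneg_left (h5 k) (h10 k)
    calc (∑ s, z s) = ∑ s, ∑ a1, f s a1 * z s := hL.symm
      _ ≤ _ := step
      _ = _ := hR
      _ ≤ _ := by linarith
  -- Key weak-duality lemma for player 2: any feasible y satisfies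
  -- v ≤ cost(y) + penalty(y)
  have key : ∀ y : S → A2 → ℝ,
      (∀ s a2, 0 ≤ y s a2) →
      (∑ s, ∑ a2, y s a2 = 1) →
      (∀ s', ∑ s, ∑ a2, ((if s = s' then (1 : ℝ) else 0) - p s a2 s') * y s a2 = 0) →
      v ≤ (∑ s, ∑ a1, ∑ a2, f s a1 * C2 s a1 a2 * y s a2)
          + ∑ l, δ2 l * ∑ s, ∑ a1, ∑ a2, f s a1 * D2 l s a1 a2 * y s a2 := by
    intro y hy0 hy1 hy3
    have hflow : ∀ s', ∑ s, ∑ a2, p s a2 s' * y s a2 = ∑ a2, y s' a2 := by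
      intro s'
      have h := hy3 s'
      simp only [sub_mul, Finset.sum_sub_distrib] at h
      have h1' : ∑ s, ∑ a2, (if s = s' then (1 : ℝ) else 0) * y s a2 = ∑ a2, y s' a2 := by
        have : ∀ s, ∑ a2, (if s = s' then (1 : ℝ) else 0) * y s a2
            = if s = s' then ∑ a2, y s a2 else 0 := by
          intro s
          by_cases hs : s = s' <;> simp [hs]
        rw [Finset.sum_congr rfl fun s _ => this s, Finset.sum_ite_eq' Finset.univ s'
          (fun s => ∑ a2, y s a2)]
        simp
      linarith
    have step : ∑ s, ∑ a2, y s a2 * (v + u s)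
        ≤ ∑ s, ∑ a2, y s a2 * ((∑ a1, f s a1 * C2 s a1 a2)
            + (∑ l, δ2 l * ∑ a1, f s a1 * D2 l s a1 a2)
            + ∑ s', p s a2 s' * u s') :=
      Finset.sum_le_sum fun s _ => Finset.sum_le_sum fun a2 _ =>
        mul_le_mul_of_nonneg_left (h1 s a2) (hy0 s a2)
    have hL : ∑ s, ∑ a2, y s a2 * (v + u s)
        = v + ∑ s, u s * ∑ a2, y s a2 := by
      simp only [mul_add, Finset.sum_add_distrib]
      congr 1
      · rw [show (∑ s, ∑ a2, y s a2 * v) = (∑ s, ∑ a2, y s a2) * v from by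
            rw [Finset.sum_mul]; exact Finset.sum_congr rfl fun s _ => (Finset.sum_mul ..).symm]
        rw [hy1, one_mul]
      · refine Finset.sum_congr rfl fun s _ => ?_
        rw [Finset.mul_sum]
        exact Finset.sum_congr rfl fun a2 _ => by ring
    have hA : ∑ s, ∑ a2, y s a2 * ∑ a1, f s a1 * C2 s a1 a2
        = ∑ s, ∑ a1, ∑ a2, f s a1 * C2 s a1 a2 * y s a2 := by
      refine Finset.sum_congr rfl fun s _ => ?_
      rw [show (∑ a2, y s a2 * ∑ a1, f s a1 * C2 s a1 a2)
          = ∑ a2, ∑ a1, f s a1 * C2 s a1 a2 * y s a2 from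
        Finset.sum_congr rfl fun a2 _ => by
          rw [Finset.mul_sum]; exact Finset.sum_congr rfl fun a1 _ => by ring]
      exact Finset.sum_comm
    have hB : ∑ s, ∑ a2, y s a2 * ∑ l, δ2 l * ∑ a1, f s a1 * D2 l s a1 a2
        = ∑ l, δ2 l * ∑ s, ∑ a1, ∑ a2, f s a1 * D2 l s a1 a2 * y s a2 := by
      rw [show (∑ s, ∑ a2, y s a2 * ∑ l, δ2 l * ∑ a1, f s a1 * D2 l s a1 a2)
          = ∑ s, ∑ l, ∑ a2, ∑ a1, δ2 l * (f s a1 * D2 l s a1 a2 * y s a2) from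
        Finset.sum_congr rfl fun s _ => by
          rw [show (∑ a2, y s a2 * ∑ l, δ2 l * ∑ a1, f s a1 * D2 l s a1 a2)
              = ∑ a2, ∑ l, ∑ a1, δ2 l * (f s a1 * D2 l s a1 a2 * y s a2) from
            Finset.sum_congr rfl fun a2 _ => by
              rw [Finset.mul_sum]
              refine Finset.sum_congr rfl fun l _ => ?_
              rw [Finset.mul_sum, Finset.mul_sum]
              exact Finset.sum_congr rfl fun a1 _ => by ring]
          exact Finset.sum_comm]
      refine Finset.sum_comm.trans ?_
      refine Finset.sum_congr rfl fun l _ => ?_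
      rw [Finset.mul_sum]
      refine Finset.sum_congr rfl fun s _ => ?_
      refine Finset.sum_comm.trans ?_
      rw [Finset.mul_sum]
      refine Finset.sum_congr rfl fun a1 _ => ?_
      rw [Finset.mul_sum]
    have hT : ∑ s, ∑ a2, y s a2 * ∑ s', p s a2 s' * u s'
        = ∑ s', u s' * ∑ a2, y s' a2 := by
      rw [show (∑ s, ∑ a2, y s a2 * ∑ s', p s a2 s' * u s')
          = ∑ s', ∑ s, ∑ a2, u s' * (p s a2 s' * y s a2) from by
        rw [show (∑ s, ∑ a2, y s a2 * ∑ s', p s a2 s' * u s')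
            = ∑ s, ∑ s', ∑ a2, u s' * (p s a2 s' * y s a2) from
          Finset.sum_congr rfl fun s _ => by
            rw [show (∑ a2, y s a2 * ∑ s', p s a2 s' * u s')
                = ∑ a2, ∑ s', u s' * (p s a2 s' * y s a2) from
              Finset.sum_congr rfl fun a2 _ => by
                rw [Finset.mul_sum]
                exact Finset.sum_congr rfl fun s' _ => by ring]
            exact Finset.sum_comm]
        exact Finset.sum_comm]
      refine Finset.sum_congr rfl fun s' _ => ?_
      rw [show (∑ s, ∑ a2, u s' * (p s a2 s' * y s a2))
          = u s' * ∑ s, ∑ a2, p s a2 s' * y s a2 from by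
        rw [Finset.mul_sum]
        exact Finset.sum_congr rfl fun s _ => (Finset.mul_sum ..).symm]
      rw [hflow s']
    have hR : ∑ s, ∑ a2, y s a2 * ((∑ a1, f s a1 * C2 s a1 a2)
            + (∑ l, δ2 l * ∑ a1, f s a1 * D2 l s a1 a2)
            + ∑ s', p s a2 s' * u s')
        = (∑ s, ∑ a1, ∑ a2, f s a1 * C2 s a1 a2 * y s a2)
          + (∑ l, δ2 l * ∑ s, ∑ a1, ∑ a2, f s a1 * D2 l s a1 a2 * y s a2)
          + ∑ s', u s' * ∑ a2, y s' a2 := by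
      simp only [mul_add, Finset.sum_add_distrib]
      rw [hA, hB, hT]
    rw [hL, hR] at step
    linarith
  -- apply key to x : second bracket is nonnegative
  have hkx := key x h9 h4 h3
  have hpenx : ∑ l, δ2 l * ∑ s, ∑ a1, ∑ a2, f s a1 * D2 l s a1 a2 * x s a2
      ≤ ∑ l, δ2 l * ξ2 l :=
    Finset.sum_le_sum fun l _ => mul_le_mul_of_nonneg_left (h6 l) (h11 l)
  intro x' hx0 hx1 hx3 hx4
  have hkx' := key x' hx0 hx1 hx3
  have hpenx' : ∑ l, δ2 l * ∑ s, ∑ a1, ∑ a2, f s a1 * D2 l s a1 a2 * x' s a2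
      ≤ ∑ l, δ2 l * ξ2 l :=
    Finset.sum_le_sum fun l _ => mul_le_mul_of_nonneg_left (hx4 l) (h11 l)
  linarith
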